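/- Let K = (k_0, …, k_N) and K' = (k'_0, …, k'_N) be switching policies such that k'_i ≤ k_i for every 0 ≤ i ≤ N. Then W_q(K') ≤ W_q(K), F(K') ≥ F(K), and B(K') ≤ B(K); that is, the expected waiting time and the expected number of back-room workers are componentwise nondecreasing, and the expected number of front-room workers componentwise nonincreasing, functions of the switching points. -/

import Mathlib

open Finset

/-- A switching policy: `k 0 ≥ 0`, `k i - k (i-1) ≥ 1` for `1 ≤ i ≤ N`, and `k N = S`. -/
def IsPolicy (N : ℕ) (S : ℤ) (k : ℕ → ℤ) : Prop :=
  0 ≤ k 0 ∧ (∀ i : ℕ, 1 ≤ i → i ≤ N → 1 ≤ k i - k (i - 1)) ∧ k N = S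

/-- `X_i = ∏_{g=1}^{i-1} (1/g)^(k_g - k_{g-1})`. -/
noncomputable def Xcoef (k : ℕ → ℤ) (i : ℕ) : ℝ :=
  ∏ g ∈ Finset.Icc 1 (i - 1), ((1 : ℝ) / (g : ℝ)) ^ (k g - k (g - 1))

/-- `β (k 0) = 1` and, for `1 ≤ i ≤ N` and `k (i-1) + 1 ≤ j ≤ k i`,
`β j = (λ/μ)^(j - k 0) * (1/i)^(j - k (i-1)) * X_i`. -/
def IsBeta (lam mu : ℝ) (N : ℕ) (k : ℕ → ℤ) (β : ℤ → ℝ) : Prop :=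
  β (k 0) = 1 ∧
  ∀ i : ℕ, 1 ≤ i → i ≤ N → ∀ j : ℤ, k (i - 1) + 1 ≤ j → j ≤ k i →
    β j = (lam / mu) ^ (j - k 0) * ((1 : ℝ) / (i : ℝ)) ^ (j - k (i - 1)) * Xcoef k i

/-- Steady-state probabilities `P j = β j / Σ_{m=k 0}^{S} β m`. -/
noncomputable def Pfun (S : ℤ) (k : ℕ → ℤ) (β : ℤ → ℝ) (j : ℤ) : ℝ :=
  β j / ∑ m ∈ Finset.Icc (k 0) S, β m

/-- Expected number of front-room workers. -/
noncomputable def Fval (N : ℕ) (S : ℤ) (k : ℕ → ℤ) (β : ℤ → ℝ) : ℝ :=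
  ∑ i ∈ Finset.Icc 1 N, ∑ j ∈ Finset.Icc (k (i - 1) + 1) (k i), (i : ℝ) * Pfun S k β j

/-- Expected number of back-room workers. -/
noncomputable def Bval (N : ℕ) (S : ℤ) (k : ℕ → ℤ) (β : ℤ → ℝ) : ℝ :=
  (N : ℝ) - Fval N S k β

/-- Expected number of customers in the front room. -/
noncomputable def Lval (S : ℤ) (k : ℕ → ℤ) (β : ℤ → ℝ) : ℝ :=
  ∑ j ∈ Finset.Icc (k 0) S, (j : ℝ) * Pfun S k β j

/-- Expected waiting time `W_q = L / (λ (1 - P S)) - 1/μ`. -/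
noncomputable def Wq (lam mu : ℝ) (S : ℤ) (k : ℕ → ℤ) (β : ℤ → ℝ) : ℝ :=
  Lval S k β / (lam * (1 - Pfun S k β S)) - 1 / mu

-- k is monotone (strictly) up to N
lemma k_mono {N : ℕ} {S : ℤ} {k : ℕ → ℤ} (hk : IsPolicy N S k) :
    ∀ b, b ≤ N → ∀ a, a < b → k a < k b := by
  intro b
  induction b with
  | zero => intro _ a ha; omega
  | succ n ih =>
    intro hb a ha
    have h1 : 1 ≤ k (n+1) - k n := by
      have := hk.2.1 (n+1) (by omega) hb
      simpa using this
    rcases Nat.lt_succ_iff_lt_or_eq.mp ha with h | h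
    · have := ih (by omega) a h; omega
    · subst h; omega

lemma k_mono_le {N : ℕ} {S : ℤ} {k : ℕ → ℤ} (hk : IsPolicy N S k) :
    ∀ b, b ≤ N → ∀ a, a ≤ b → k a ≤ k b := by
  intro b hb a ha
  rcases eq_or_lt_of_le ha with h | h
  · exact le_of_eq (by rw [h])
  · exact (k_mono hk b hb a h).le

-- interval existence
lemma interval_exists {N : ℕ} {S : ℤ} {k : ℕ → ℤ} (hk : IsPolicy N S k)
    {j : ℤ} (h1 : k 0 < j) (h2 : j ≤ S) :
    ∃ i : ℕ, 1 ≤ i ∧ i ≤ N ∧ k (i-1) < j ∧ j ≤ k i := by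
  have hpN : j ≤ k N := by rw [hk.2.2]; exact h2
  classical
  have hex : ∃ i : ℕ, j ≤ k i := ⟨N, hpN⟩
  set i := Nat.find hex with hi
  have hji : j ≤ k i := Nat.find_spec hex
  have hiN : i ≤ N := Nat.find_le hpN
  have hi0 : i ≠ 0 := by
    intro h0
    have : j ≤ k 0 := by rw [← h0]; exact hji
    omega
  have hmin : ¬ j ≤ k (i-1) := Nat.find_min hex (by omega)
  exact ⟨i, by omega, hiN, by omega, hji⟩

lemma beta_ratio {lam mu : ℝ} (hlam : 0 < lam) (hmu : 0 < mu) {N : ℕ} {S : ℤ} {k : ℕ → ℤ}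
    (hk : IsPolicy N S k) {β : ℤ → ℝ} (hβ : IsBeta lam mu N k β) :
    ∀ i : ℕ, 1 ≤ i → i ≤ N → ∀ j : ℤ, k (i-1) < j → j ≤ k i →
      β j = β (j-1) * ((lam/mu) * (1/(i:ℝ))) := by
  intro i hi1 hiN j hj1 hj2
  have hlm : (lam/mu) ≠ 0 := ne_of_gt (div_pos hlam hmu)
  have hii : ((i:ℝ)) ≠ 0 := by positivity
  have hinv : (1/(i:ℝ)) ≠ 0 := by positivity
  by_cases hcase : k (i-1) + 1 < j
  · have e1 := hβ.2 i hi1 hiN j (by omega) hj2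
    have e2 := hβ.2 i hi1 hiN (j-1) (by omega) (by omega)
    rw [e1, e2]
    have d1 : j - k 0 = (j - 1 - k 0) + 1 := by ring
    have d2 : j - k (i-1) = (j - 1 - k (i-1)) + 1 := by ring
    rw [d1, d2, zpow_add_one₀ hlm, zpow_add_one₀ hinv]
    ring
  · have hj : j = k (i-1) + 1 := by omega
    rcases Nat.lt_or_ge i 2 with h2 | h2
    · have hi1' : i = 1 := by omega
      subst hi1'
      have e1 := hβ.2 1 le_rfl hiN j (by omega) hj2
      have hx : Xcoef k 1 = 1 := by simp [Xcoef]
      have hjk : j - k 0 = 1 := by simp at hj ⊢; omega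
      have hjk' : j - k (1-1) = 1 := by simpa using hjk
      rw [e1, hx, hjk]
      have hb0 : β (j - 1) = 1 := by
        have : j - 1 = k 0 := by simp at hj; omega
        rw [this]; exact hβ.1
      rw [hb0]
      norm_num
    · obtain ⟨p, hp⟩ : ∃ p, i = p + 2 := ⟨i - 2, by omega⟩
      subst hp
      have hred : p + 2 - 1 = p + 1 := rfl
      rw [hred] at hcase hj
      have hstep : 1 ≤ k (p+1) - k p := by
        have := hk.2.1 (p+1) (by omega) (by omega)
        simpa using this
      have e0 := hβ.2 (p+1) (by omega) (by omega) (k (p+1)) (by simp; omega) le_rfl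
      have e1 := hβ.2 (p+2) (by omega) hiN j (by omega) hj2
      rw [hred] at e1
      have hxp : Xcoef k (p+2) = Xcoef k (p+1) * (1/((p+1:ℕ):ℝ)) ^ (k (p+1) - k p) := by
        have : Finset.Icc 1 (p+2-1) = Finset.Icc 1 (p+1) := rfl
        rw [Xcoef, this, Finset.prod_Icc_succ_top (Nat.succ_le_succ (Nat.zero_le p))]
        simp [Xcoef]
      have hj1' : j - 1 = k (p+1) := by omega
      have da : j - k 0 = (k (p+1) - k 0) + 1 := by omega
      have db : j - k (p+1) = 1 := by omega
      rw [e1, hxp, da, db, zpow_add_one₀ hlm, zpow_one, hj1', e0]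
      simp only [Nat.add_sub_cancel]
      push_cast
      ring

lemma beta_pos {lam mu : ℝ} (hlam : 0 < lam) (hmu : 0 < mu) {N : ℕ} {S : ℤ} {k : ℕ → ℤ}
    (hk : IsPolicy N S k) {β : ℤ → ℝ} (hβ : IsBeta lam mu N k β) :
    ∀ j : ℤ, k 0 ≤ j → j ≤ S → 0 < β j := by
  intro j hj
  refine Int.le_induction (motive := fun j _ => j ≤ S → 0 < β j) ?_ ?_ j hj
  · intro _; rw [hβ.1]; norm_num
  · intro n hn ih hnS
    obtain ⟨i, hi1, hiN, hL, hR⟩ := interval_exists hk (by omega) hnS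
    have hr := beta_ratio hlam hmu hk hβ i hi1 hiN (n+1) hL hR
    simp only [add_sub_cancel_right] at hr
    rw [hr]
    have h1 : 0 < β n := ih (by omega)
    have h2 : (0:ℝ) < (i:ℝ) := by exact_mod_cast hi1
    positivity

lemma beta_antitone {lam mu : ℝ} (hlam : 0 < lam) (hmu : 0 < mu) {N : ℕ} {S : ℤ}
    {k k' : ℕ → ℤ} (hk : IsPolicy N S k) (hk' : IsPolicy N S k')
    (hle : ∀ i : ℕ, i ≤ N → k' i ≤ k i)
    {β β' : ℤ → ℝ} (hβ : IsBeta lam mu N k β) (hβ' : IsBeta lam mu N k' β') :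
    ∀ j m : ℤ, k 0 ≤ j → j ≤ m → m ≤ S → β' m * β j ≤ β' j * β m := by
  intro j m hj hjm
  have hk'0 : k' 0 ≤ k 0 := hle 0 (Nat.zero_le N)
  refine Int.le_induction (motive := fun m _ => m ≤ S → β' m * β j ≤ β' j * β m) ?_ ?_ m hjm
  · intro _; rw [mul_comm]
  · intro n hn ih hnS
    obtain ⟨i, hi1, hiN, hL, hR⟩ := interval_exists hk (by omega) hnS
    obtain ⟨i', hi'1, hi'N, hL', hR'⟩ := interval_exists hk' (by omega) hnS
    have hii' : i ≤ i' := by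
      by_contra h
      push_neg at h
      have h1 : k i' ≤ k (i-1) := k_mono_le hk (i-1) (by omega) i' (by omega)
      have h2 : n+1 ≤ k i' := le_trans hR' (hle i' hi'N)
      omega
    have hrb := beta_ratio hlam hmu hk hβ i hi1 hiN (n+1) hL hR
    have hrb' := beta_ratio hlam hmu hk' hβ' i' hi'1 hi'N (n+1) hL' hR'
    simp only [add_sub_cancel_right] at hrb hrb'
    have pbj : 0 < β j := beta_pos hlam hmu hk hβ j hj (by omega)
    have pbn : 0 < β n := beta_pos hlam hmu hk hβ n (by omega) (by omega)
    have pb'j : 0 < β' j := beta_pos hlam hmu hk' hβ' j (by omega) (by omega)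
    have hipos : (0:ℝ) < (i:ℝ) := by exact_mod_cast hi1
    have hinv : (1:ℝ)/(i':ℝ) ≤ 1/(i:ℝ) :=
      one_div_le_one_div_of_le hipos (by exact_mod_cast hii')
    calc β' (n+1) * β j = (β' n * β j) * ((lam/mu)*(1/(i':ℝ))) := by rw [hrb']; ring
      _ ≤ (β' j * β n) * ((lam/mu)*(1/(i':ℝ))) := by
          apply mul_le_mul_of_nonneg_right (ih (by omega))
          have : (0:ℝ) < (i':ℝ) := by exact_mod_cast hi'1
          positivity
      _ ≤ (β' j * β n) * ((lam/mu)*(1/(i:ℝ))) := by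
          apply mul_le_mul_of_nonneg_left
          · exact mul_le_mul_of_nonneg_left hinv (le_of_lt (div_pos hlam hmu))
          · positivity
      _ = β' j * β (n+1) := by rw [hrb]; ring

lemma partition_sum {N : ℕ} {S : ℤ} {k : ℕ → ℤ} (hk : IsPolicy N S k) (f : ℤ → ℝ) :
    ∑ i ∈ Finset.Icc 1 N, ∑ j ∈ Finset.Icc (k (i-1) + 1) (k i), f j
      = ∑ j ∈ Finset.Icc (k 0 + 1) (k N), f j := by
  have icc_ioc : ∀ a b : ℤ, Finset.Icc (a+1) b = Finset.Ioc a b := by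
    intro a b; ext x; simp [Finset.mem_Icc, Finset.mem_Ioc]
  simp only [icc_ioc]
  have : ∀ n, n ≤ N → ∑ i ∈ Finset.Icc 1 n, ∑ j ∈ Finset.Ioc (k (i-1)) (k i), f j
      = ∑ j ∈ Finset.Ioc (k 0) (k n), f j := by
    intro n
    induction n with
    | zero => intro _; simp
    | succ n ih =>
      intro hn
      rw [Finset.sum_Icc_succ_top (Nat.succ_le_succ (Nat.zero_le n)), ih (by omega)]
      have h1 : k 0 ≤ k n := k_mono_le hk n (by omega) 0 (Nat.zero_le n)
      have h2 : k n ≤ k (n+1) := k_mono_le hk (n+1) hn n (by omega)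
      simp only [Nat.add_sub_cancel]
      rw [← Finset.Ioc_union_Ioc_eq_Ioc h1 h2,
        Finset.sum_union (by rw [Finset.disjoint_left]; intro x hx hx'; simp [Finset.mem_Ioc] at hx hx'; omega)]
  exact this N le_rfl

lemma reindex_sum (a b : ℤ) (g : ℤ → ℝ) :
    ∑ j ∈ Finset.Icc (a+1) b, g (j-1) = ∑ j ∈ Finset.Icc a (b-1), g j := by
  have hmap : Finset.Icc (a+1) b = (Finset.Icc a (b-1)).map (addRightEmbedding 1) := by
    rw [Finset.map_add_right_Icc, sub_add_cancel]
  rw [hmap, Finset.sum_map]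
  apply Finset.sum_congr rfl
  intro x _
  simp [addRightEmbedding]

lemma icc_split_top {a b : ℤ} (h : a ≤ b) (g : ℤ → ℝ) :
    ∑ j ∈ Finset.Icc a b, g j = (∑ j ∈ Finset.Icc a (b-1), g j) + g b := by
  have : Finset.Icc a b = insert b (Finset.Icc a (b-1)) := by
    ext x; simp [Finset.mem_Icc, Finset.mem_insert]; omega
  rw [this, Finset.sum_insert (by simp [Finset.mem_Icc]; try omega)]
  ring

lemma T_pos {lam mu : ℝ} (hlam : 0 < lam) (hmu : 0 < mu) {N : ℕ} {S : ℤ} {k : ℕ → ℤ}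
    (hk : IsPolicy N S k) {β : ℤ → ℝ} (hβ : IsBeta lam mu N k β) (hk0S : k 0 ≤ S) :
    0 < ∑ m ∈ Finset.Icc (k 0) S, β m :=
  Finset.sum_pos (fun m hm => beta_pos hlam hmu hk hβ m (Finset.mem_Icc.mp hm).1
    (Finset.mem_Icc.mp hm).2) ⟨k 0, Finset.mem_Icc.mpr ⟨le_rfl, hk0S⟩⟩

lemma k0_lt_S {N : ℕ} {S : ℤ} {k : ℕ → ℤ} (hN : 1 ≤ N) (hk : IsPolicy N S k) : k 0 < S := by
  have := k_mono hk N le_rfl 0 (by omega)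
  rw [hk.2.2] at this
  exact this

lemma Fval_eq {lam mu : ℝ} (hlam : 0 < lam) (hmu : 0 < mu) {N : ℕ} {S : ℤ} {k : ℕ → ℤ}
    (hN : 1 ≤ N) (hk : IsPolicy N S k) {β : ℤ → ℝ} (hβ : IsBeta lam mu N k β) :
    Fval N S k β = (lam/mu) * (1 - Pfun S k β S) := by
  have hk0S : k 0 < S := k0_lt_S hN hk
  set T := ∑ m ∈ Finset.Icc (k 0) S, β m with hTdef
  have hTpos : 0 < T := T_pos hlam hmu hk hβ hk0S.le
  have hTne : T ≠ 0 := ne_of_gt hTpos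
  have step1 : Fval N S k β
      = ∑ i ∈ Finset.Icc 1 N, ∑ j ∈ Finset.Icc (k (i-1)+1) (k i), ((lam/mu) * β (j-1)) / T := by
    unfold Fval Pfun
    apply Finset.sum_congr rfl
    intro i hi
    apply Finset.sum_congr rfl
    intro j hj
    simp only [Finset.mem_Icc] at hi hj
    have hr := beta_ratio hlam hmu hk hβ i hi.1 hi.2 j (by omega) hj.2
    rw [hr]
    have hne : ((i:ℝ)) ≠ 0 := by
      have : (0:ℝ) < (i:ℝ) := by exact_mod_cast hi.1
      positivity
    rw [← hTdef]
    field_simp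
  rw [step1, partition_sum hk (fun j => ((lam/mu) * β (j-1)) / T), hk.2.2,
    reindex_sum (k 0) S (fun j => ((lam/mu) * β j) / T)]
  have hsplit := icc_split_top hk0S.le β
  have : Pfun S k β S = β S / T := rfl
  rw [this]
  rw [show (∑ j ∈ Finset.Icc (k 0) (S-1), ((lam/mu) * β j) / T)
      = (lam/mu) * (∑ j ∈ Finset.Icc (k 0) (S-1), β j) / T from by
    rw [Finset.mul_sum, Finset.sum_div]]
  have hb : (∑ j ∈ Finset.Icc (k 0) (S-1), β j) = T - β S := by
    rw [hTdef]
    linarith [hsplit]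
  rw [hb]
  field_simp
  try ring

lemma icc_split_low {a' a b : ℤ} (h1 : a' ≤ a) (h2 : a ≤ b + 1) (g : ℤ → ℝ) :
    ∑ j ∈ Finset.Icc a' b, g j
      = (∑ j ∈ Finset.Icc a' (a-1), g j) + ∑ j ∈ Finset.Icc a b, g j := by
  rw [← Finset.sum_union (by
    rw [Finset.disjoint_left]; intro x hx hx'
    simp [Finset.mem_Icc] at hx hx'; omega)]
  congr 1
  ext x; simp [Finset.mem_Icc, Finset.mem_union]; omega

-- the double-sum rearrangement inequality
lemma double_sum_ineq {B : Finset ℤ} {β β' : ℤ → ℝ}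
    (hanti : ∀ j ∈ B, ∀ m ∈ B, j ≤ m → β' m * β j ≤ β' j * β m) :
    (∑ j ∈ B, (j:ℝ) * β' j) * (∑ m ∈ B, β m)
      ≤ (∑ j ∈ B, (j:ℝ) * β j) * (∑ m ∈ B, β' m) := by
  have key : ∀ j ∈ B, ∀ m ∈ B, 0 ≤ ((j:ℝ) - (m:ℝ)) * (β j * β' m - β' j * β m) := by
    intro j hj m hm
    rcases le_total j m with h | h
    · have h1 := hanti j hj m hm h
      have h2 : ((j:ℝ) - m) ≤ 0 := by
        have : (j:ℝ) ≤ m := by exact_mod_cast h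
        linarith
      nlinarith
    · have h1 := hanti m hm j hj h
      have h2 : (0:ℝ) ≤ ((j:ℝ) - m) := by
        have : (m:ℝ) ≤ j := by exact_mod_cast h
        linarith
      nlinarith
  set X := ∑ j ∈ B, ∑ m ∈ B, (j:ℝ) * (β j * β' m - β' j * β m) with hX
  have hY : ∑ j ∈ B, ∑ m ∈ B, (m:ℝ) * (β j * β' m - β' j * β m) = -X := by
    rw [Finset.sum_comm, hX, ← Finset.sum_neg_distrib]
    apply Finset.sum_congr rfl; intro a _
    rw [← Finset.sum_neg_distrib]
    apply Finset.sum_congr rfl; intro b _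
    ring
  have hnn : 0 ≤ ∑ j ∈ B, ∑ m ∈ B, ((j:ℝ) - (m:ℝ)) * (β j * β' m - β' j * β m) :=
    Finset.sum_nonneg fun j hj => Finset.sum_nonneg fun m hm => key j hj m hm
  have hexp : ∑ j ∈ B, ∑ m ∈ B, ((j:ℝ) - (m:ℝ)) * (β j * β' m - β' j * β m)
      = X - ∑ j ∈ B, ∑ m ∈ B, (m:ℝ) * (β j * β' m - β' j * β m) := by
    rw [hX, ← Finset.sum_sub_distrib]
    apply Finset.sum_congr rfl; intro a _
    rw [← Finset.sum_sub_distrib]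
    apply Finset.sum_congr rfl; intro b _
    ring
  have hXnn : 0 ≤ X := by
    rw [hexp, hY] at hnn
    linarith
  have hfin : (∑ j ∈ B, (j:ℝ) * β j) * (∑ m ∈ B, β' m)
      - (∑ j ∈ B, (j:ℝ) * β' j) * (∑ m ∈ B, β m) = X := by
    rw [hX, Finset.sum_mul_sum, Finset.sum_mul_sum, ← Finset.sum_sub_distrib]
    apply Finset.sum_congr rfl; intro a _
    rw [← Finset.sum_sub_distrib]
    apply Finset.sum_congr rfl; intro b _
    ring
  linarith

lemma core_ineq {lam mu : ℝ} (hlam : 0 < lam) (hmu : 0 < mu) {N : ℕ} (hN : 1 ≤ N) {S : ℤ}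
    {k k' : ℕ → ℤ} (hk : IsPolicy N S k) (hk' : IsPolicy N S k')
    (hle : ∀ i : ℕ, i ≤ N → k' i ≤ k i)
    {β β' : ℤ → ℝ} (hβ : IsBeta lam mu N k β) (hβ' : IsBeta lam mu N k' β') :
    (∑ j ∈ Finset.Icc (k' 0) S, (j:ℝ) * β' j) * (∑ m ∈ Finset.Icc (k 0) (S-1), β m)
      ≤ (∑ j ∈ Finset.Icc (k 0) S, (j:ℝ) * β j) * (∑ m ∈ Finset.Icc (k' 0) (S-1), β' m) := by
  have hk0S : k 0 < S := k0_lt_S hN hk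
  have hk'0 : k' 0 ≤ k 0 := hle 0 (Nat.zero_le N)
  have hk00 : 0 ≤ k' 0 := hk'.1
  have hS0 : (0:ℤ) ≤ S := by omega
  have hSr : (0:ℝ) ≤ (S:ℝ) := by exact_mod_cast hS0
  have hanti := beta_antitone hlam hmu hk hk' hle hβ hβ'
  have pβ : ∀ m : ℤ, k 0 ≤ m → m ≤ S → 0 < β m := beta_pos hlam hmu hk hβ
  have pβ' : ∀ m : ℤ, k' 0 ≤ m → m ≤ S → 0 < β' m := beta_pos hlam hmu hk' hβ'
  rw [icc_split_low hk'0 (by omega) (fun j => (j:ℝ) * β' j),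
      icc_split_low hk'0 (by omega) β',
      icc_split_top hk0S.le (fun j => (j:ℝ) * β j),
      icc_split_top hk0S.le (fun j => (j:ℝ) * β' j)]
  set L1 := ∑ j ∈ Finset.Icc (k' 0) (k 0 - 1), (j:ℝ) * β' j with hL1
  set L2 := ∑ j ∈ Finset.Icc (k' 0) (k 0 - 1), β' j with hL2
  set C1 := ∑ j ∈ Finset.Icc (k 0) (S-1), (j:ℝ) * β' j with hC1
  set C2 := ∑ j ∈ Finset.Icc (k 0) (S-1), β' j with hC2
  set D1 := ∑ j ∈ Finset.Icc (k 0) (S-1), (j:ℝ) * β j with hD1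
  set b := ∑ j ∈ Finset.Icc (k 0) (S-1), β j with hb
  -- show (L1 + (C1 + S β' S)) * b ≤ (D1 + S β S) * (L2 + C2)
  have hbSpos : 0 < β S := pβ S hk0S.le le_rfl
  have hSβS : 0 ≤ (S:ℝ) * β S := mul_nonneg hSr hbSpos.le
  have p1 : L1 * b ≤ (D1 + (S:ℝ) * β S) * L2 := by
    have per : ∀ t ∈ Finset.Icc (k' 0) (k 0 - 1),
        ((t:ℝ) * β' t) * b ≤ β' t * (D1 + (S:ℝ) * β S) := by
      intro t ht
      simp only [Finset.mem_Icc] at ht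
      have hβ't : 0 < β' t := pβ' t ht.1 (by omega)
      have htb : (t:ℝ) * b ≤ D1 + (S:ℝ) * β S := by
        have h1 : (t:ℝ) * b ≤ D1 := by
          rw [hb, hD1, Finset.mul_sum]
          apply Finset.sum_le_sum
          intro m hm
          simp only [Finset.mem_Icc] at hm
          have : (t:ℝ) ≤ (m:ℝ) := by exact_mod_cast (by omega : t ≤ m)
          exact mul_le_mul_of_nonneg_right this (pβ m hm.1 (by omega)).le
        linarith
      calc ((t:ℝ) * β' t) * b = β' t * ((t:ℝ) * b) := by ring
        _ ≤ β' t * (D1 + (S:ℝ) * β S) := mul_le_mul_of_nonneg_left htb hβ't.le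
    calc L1 * b = ∑ t ∈ Finset.Icc (k' 0) (k 0 - 1), ((t:ℝ) * β' t) * b := by
          rw [hL1, Finset.sum_mul]
      _ ≤ ∑ t ∈ Finset.Icc (k' 0) (k 0 - 1), β' t * (D1 + (S:ℝ) * β S) :=
          Finset.sum_le_sum per
      _ = (D1 + (S:ℝ) * β S) * L2 := by rw [hL2, Finset.mul_sum]; apply Finset.sum_congr rfl; intros; ring
  have p2 : C1 * b ≤ D1 * C2 := by
    have := double_sum_ineq (B := Finset.Icc (k 0) (S-1)) (β := β) (β' := β')
      (by
        intro j hj m hm hjm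
        simp only [Finset.mem_Icc] at hj hm
        exact hanti j m hj.1 hjm (by omega))
    rw [hC1, hb, hD1, hC2]
    exact this
  have p3 : ((S:ℝ) * β' S) * b ≤ ((S:ℝ) * β S) * C2 := by
    rw [hb, hC2, Finset.mul_sum, Finset.mul_sum]
    apply Finset.sum_le_sum
    intro m hm
    simp only [Finset.mem_Icc] at hm
    have h1 : β' S * β m ≤ β' m * β S := hanti m S hm.1 (by omega) le_rfl
    calc (S:ℝ) * β' S * β m = (S:ℝ) * (β' S * β m) := by ring
      _ ≤ (S:ℝ) * (β' m * β S) := mul_le_mul_of_nonneg_left h1 hSr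
      _ = (S:ℝ) * β S * β' m := by ring
  have hL2nn : 0 ≤ L2 := Finset.sum_nonneg fun t ht => by
    simp only [Finset.mem_Icc] at ht
    exact (pβ' t ht.1 (by omega)).le
  nlinarith [p1, p2, p3]

lemma PS_le {lam mu : ℝ} (hlam : 0 < lam) (hmu : 0 < mu) {N : ℕ} (hN : 1 ≤ N) {S : ℤ}
    {k k' : ℕ → ℤ} (hk : IsPolicy N S k) (hk' : IsPolicy N S k')
    (hle : ∀ i : ℕ, i ≤ N → k' i ≤ k i)
    {β β' : ℤ → ℝ} (hβ : IsBeta lam mu N k β) (hβ' : IsBeta lam mu N k' β') :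
    Pfun S k' β' S ≤ Pfun S k β S := by
  have hk0S : k 0 < S := k0_lt_S hN hk
  have hk'0S : k' 0 < S := k0_lt_S hN hk'
  have hk'0 : k' 0 ≤ k 0 := hle 0 (Nat.zero_le N)
  have hT : 0 < ∑ m ∈ Finset.Icc (k 0) S, β m := T_pos hlam hmu hk hβ hk0S.le
  have hT' : 0 < ∑ m ∈ Finset.Icc (k' 0) S, β' m := T_pos hlam hmu hk' hβ' hk'0S.le
  have hanti := beta_antitone hlam hmu hk hk' hle hβ hβ'
  have pβ' : ∀ m : ℤ, k' 0 ≤ m → m ≤ S → 0 < β' m := beta_pos hlam hmu hk' hβ'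
  have hbS : 0 < β S := beta_pos hlam hmu hk hβ S hk0S.le le_rfl
  unfold Pfun
  rw [div_le_div_iff₀ hT' hT]
  calc β' S * ∑ m ∈ Finset.Icc (k 0) S, β m
      = ∑ m ∈ Finset.Icc (k 0) S, β' S * β m := by rw [Finset.mul_sum]
    _ ≤ ∑ m ∈ Finset.Icc (k 0) S, β' m * β S := by
        apply Finset.sum_le_sum
        intro m hm
        simp only [Finset.mem_Icc] at hm
        exact hanti m S hm.1 hm.2 le_rfl
    _ = (∑ m ∈ Finset.Icc (k 0) S, β' m) * β S := by rw [Finset.sum_mul]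
    _ ≤ (∑ m ∈ Finset.Icc (k' 0) S, β' m) * β S := by
        apply mul_le_mul_of_nonneg_right _ hbS.le
        apply Finset.sum_le_sum_of_subset_of_nonneg
          (Finset.Icc_subset_Icc hk'0 le_rfl)
        intro m hm _
        simp only [Finset.mem_Icc] at hm
        exact (pβ' m hm.1 hm.2).le
    _ = β S * ∑ m ∈ Finset.Icc (k' 0) S, β' m := by ring

lemma Wq_eq {lam mu : ℝ} (hlam : 0 < lam) (hmu : 0 < mu) {N : ℕ} (hN : 1 ≤ N) {S : ℤ}
    {k : ℕ → ℤ} (hk : IsPolicy N S k) {β : ℤ → ℝ} (hβ : IsBeta lam mu N k β) :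
    Wq lam mu S k β
      = (∑ j ∈ Finset.Icc (k 0) S, (j:ℝ) * β j)
          / (lam * ∑ m ∈ Finset.Icc (k 0) (S-1), β m) - 1 / mu := by
  have hk0S : k 0 < S := k0_lt_S hN hk
  have hT : 0 < ∑ m ∈ Finset.Icc (k 0) S, β m := T_pos hlam hmu hk hβ hk0S.le
  have hbpos : 0 < ∑ m ∈ Finset.Icc (k 0) (S-1), β m :=
    Finset.sum_pos (fun m hm => beta_pos hlam hmu hk hβ m (Finset.mem_Icc.mp hm).1
      (by have := (Finset.mem_Icc.mp hm).2; omega))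
      ⟨k 0, Finset.mem_Icc.mpr ⟨le_rfl, by omega⟩⟩
  have hsplit := icc_split_top hk0S.le β
  unfold Wq Lval Pfun
  have hLv : ∑ j ∈ Finset.Icc (k 0) S, (j:ℝ) * (β j / ∑ m ∈ Finset.Icc (k 0) S, β m)
      = (∑ j ∈ Finset.Icc (k 0) S, (j:ℝ) * β j) / ∑ m ∈ Finset.Icc (k 0) S, β m := by
    rw [Finset.sum_div]
    apply Finset.sum_congr rfl
    intros
    rw [mul_div_assoc]
  rw [hLv]
  have hPv : 1 - β S / ∑ m ∈ Finset.Icc (k 0) S, β m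
      = (∑ m ∈ Finset.Icc (k 0) (S-1), β m) / ∑ m ∈ Finset.Icc (k 0) S, β m := by
    field_simp
    linarith
  rw [hPv]
  congr 1
  field_simp
  try ring

/-- Componentwise monotonicity: if `k' i ≤ k i` for all `i`, then
`W_q(K') ≤ W_q(K)`, `F(K') ≥ F(K)` and `B(K') ≤ B(K)`. -/
theorem componentwise_monotone
    (lam mu : ℝ) (hlam : 0 < lam) (hmu : 0 < mu)
    (N : ℕ) (hN : 1 ≤ N) (S : ℤ) (hS : (N : ℤ) ≤ S)
    (k k' : ℕ → ℤ) (hk : IsPolicy N S k) (hk' : IsPolicy N S k')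
    (hle : ∀ i : ℕ, i ≤ N → k' i ≤ k i)
    (β β' : ℤ → ℝ)
    (hβ : IsBeta lam mu N k β) (hβ' : IsBeta lam mu N k' β') :
    Wq lam mu S k' β' ≤ Wq lam mu S k β ∧
    Fval N S k β ≤ Fval N S k' β' ∧
    Bval N S k' β' ≤ Bval N S k β := by

  have hk0S : k 0 < S := k0_lt_S hN hk
  have hk'0S : k' 0 < S := k0_lt_S hN hk'
  have hPle : Pfun S k' β' S ≤ Pfun S k β S := PS_le hlam hmu hN hk hk' hle hβ hβ'
  have hF : Fval N S k β ≤ Fval N S k' β' := by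
    rw [Fval_eq hlam hmu hN hk hβ, Fval_eq hlam hmu hN hk' hβ']
    apply mul_le_mul_of_nonneg_left (by linarith) (div_pos hlam hmu).le
  refine ⟨?_, hF, ?_⟩
  · rw [Wq_eq hlam hmu hN hk hβ, Wq_eq hlam hmu hN hk' hβ']
    apply sub_le_sub_right
    have hbpos : 0 < ∑ m ∈ Finset.Icc (k 0) (S-1), β m :=
      Finset.sum_pos (fun m hm => beta_pos hlam hmu hk hβ m (Finset.mem_Icc.mp hm).1
        (by have := (Finset.mem_Icc.mp hm).2; omega))
        ⟨k 0, Finset.mem_Icc.mpr ⟨le_rfl, by omega⟩⟩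
    have hbpos' : 0 < ∑ m ∈ Finset.Icc (k' 0) (S-1), β' m :=
      Finset.sum_pos (fun m hm => beta_pos hlam hmu hk' hβ' m (Finset.mem_Icc.mp hm).1
        (by have := (Finset.mem_Icc.mp hm).2; omega))
        ⟨k' 0, Finset.mem_Icc.mpr ⟨le_rfl, by omega⟩⟩
    rw [div_le_div_iff₀ (mul_pos hlam hbpos') (mul_pos hlam hbpos)]
    have core := core_ineq hlam hmu hN hk hk' hle hβ hβ'
    nlinarith [core, hlam.le]
  · unfold Bval
    linarith
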